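/- arXiv:2012.14415 — 3 statements merged into one kernel-verified Lean document; each statement's English description precedes it below -/
import Mathlib

section
/- Let T ≥ 1 be an integer, α > 0, and let β(0), …, β(T−1) ∈ [0,1) and u : {0,…,T} → ℝ satisfy |u(t) − u(0) + Σ_{0≤s<t} β(s) u(s)| ≤ α for all t = 1,…,T. Then for all t = 1,…,T, |u(t) − u(0)·∏_{0≤s<t} (1 − β(s))| ≤ 2α − α·∏_{0≤s<t} (1 − β(s)) ≤ 2α. -/
open Finset

/-- A discrete reversed Gronwall-type inequality. -/
theorem reversed_gronwall (T : ℕ) (hT : 1 ≤ T) (α : ℝ) (hα : 0 < α)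
    (β u : ℕ → ℝ)
    (hβ : ∀ s, s < T → β s ∈ Set.Ico (0 : ℝ) 1)
    (h : ∀ t, 1 ≤ t → t ≤ T →
      |u t - u 0 + ∑ s ∈ Finset.range t, β s * u s| ≤ α) :
    ∀ t, 1 ≤ t → t ≤ T →
      |u t - u 0 * ∏ s ∈ Finset.range t, (1 - β s)|
        ≤ 2 * α - α * ∏ s ∈ Finset.range t, (1 - β s) ∧
      2 * α - α * ∏ s ∈ Finset.range t, (1 - β s) ≤ 2 * α := by
  -- bounds on the partial products
  have hP : ∀ t, t ≤ T → 0 < (∏ s ∈ Finset.range t, (1 - β s)) ∧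
      (∏ s ∈ Finset.range t, (1 - β s)) ≤ 1 := by
    intro t ht
    constructor
    · apply Finset.prod_pos
      intro s hs
      have := hβ s (lt_of_lt_of_le (Finset.mem_range.mp hs) ht)
      linarith [this.2]
    · apply Finset.prod_le_one
      · intro s hs
        have := hβ s (lt_of_lt_of_le (Finset.mem_range.mp hs) ht)
        linarith [this.2]
      · intro s hs
        have := hβ s (lt_of_lt_of_le (Finset.mem_range.mp hs) ht)
        linarith [this.1]
  -- |v t| ≤ α for all t ≤ T
  have hv : ∀ t, t ≤ T → |u t - u 0 + ∑ s ∈ Finset.range t, β s * u s| ≤ α := by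
    intro t ht
    rcases Nat.eq_zero_or_pos t with h0 | h1
    · subst h0; simp; linarith
    · exact h t h1 ht
  -- key induction: |f t| ≤ α (1 - P t)
  have key : ∀ t, t ≤ T →
      |u t - u 0 * ∏ s ∈ Finset.range t, (1 - β s)
        - (u t - u 0 + ∑ s ∈ Finset.range t, β s * u s)|
      ≤ α * (1 - ∏ s ∈ Finset.range t, (1 - β s)) := by
    intro t
    induction t with
    | zero => intro _; simp
    | succ n ih =>
      intro hn
      have hn' : n ≤ T := le_of_lt hn
      have ihn := ih hn'
      have hβn := hβ n hn
      have hvn := hv n hn'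
      set P := ∏ s ∈ Finset.range n, (1 - β s) with hPdef
      have hprod : ∏ s ∈ Finset.range (n+1), (1 - β s) = P * (1 - β n) := by
        rw [Finset.prod_range_succ]
      have hsum : ∑ s ∈ Finset.range (n+1), β s * u s
          = (∑ s ∈ Finset.range n, β s * u s) + β n * u n := by
        rw [Finset.sum_range_succ]
      rw [hprod, hsum]
      have heq : u (n+1) - u 0 * (P * (1 - β n))
          - (u (n+1) - u 0 + ((∑ s ∈ Finset.range n, β s * u s) + β n * u n))
          = (1 - β n) * (u n - u 0 * P - (u n - u 0 + ∑ s ∈ Finset.range n, β s * u s))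
            - β n * (u n - u 0 + ∑ s ∈ Finset.range n, β s * u s) := by ring
      rw [heq]
      have h1 : |(1 - β n) * (u n - u 0 * P - (u n - u 0 + ∑ s ∈ Finset.range n, β s * u s))
            - β n * (u n - u 0 + ∑ s ∈ Finset.range n, β s * u s)|
          ≤ (1 - β n) * |u n - u 0 * P - (u n - u 0 + ∑ s ∈ Finset.range n, β s * u s)|
            + β n * |u n - u 0 + ∑ s ∈ Finset.range n, β s * u s| := by
        calc _ ≤ |(1 - β n) * (u n - u 0 * P - (u n - u 0 + ∑ s ∈ Finset.range n, β s * u s))|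
              + |β n * (u n - u 0 + ∑ s ∈ Finset.range n, β s * u s)| := abs_sub _ _
        _ = _ := by
            rw [abs_mul, abs_mul, abs_of_nonneg (by linarith [hβn.2] : (0:ℝ) ≤ 1 - β n),
              abs_of_nonneg hβn.1]
      have h2 : (1 - β n) * |u n - u 0 * P - (u n - u 0 + ∑ s ∈ Finset.range n, β s * u s)|
          ≤ (1 - β n) * (α * (1 - P)) :=
        mul_le_mul_of_nonneg_left ihn (by linarith [hβn.2])
      have h3 : β n * |u n - u 0 + ∑ s ∈ Finset.range n, β s * u s| ≤ β n * α :=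
        mul_le_mul_of_nonneg_left hvn hβn.1
      have : (1 - β n) * (α * (1 - P)) + β n * α = α * (1 - P * (1 - β n)) := by ring
      linarith
  intro t h1 ht
  have hkey := key t ht
  have hvt := hv t ht
  have hPt := hP t ht
  constructor
  · calc |u t - u 0 * ∏ s ∈ Finset.range t, (1 - β s)|
        ≤ |u t - u 0 * ∏ s ∈ Finset.range t, (1 - β s)
            - (u t - u 0 + ∑ s ∈ Finset.range t, β s * u s)|
          + |u t - u 0 + ∑ s ∈ Finset.range t, β s * u s| := by
          have := abs_sub_abs_le_abs_sub (u t - u 0 * ∏ s ∈ Finset.range t, (1 - β s))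
            (u t - u 0 + ∑ s ∈ Finset.range t, β s * u s)
          calc |u t - u 0 * ∏ s ∈ Finset.range t, (1 - β s)|
              = |(u t - u 0 * ∏ s ∈ Finset.range t, (1 - β s)
                - (u t - u 0 + ∑ s ∈ Finset.range t, β s * u s))
                + (u t - u 0 + ∑ s ∈ Finset.range t, β s * u s)| := by ring_nf
          _ ≤ _ := abs_add_le _ _
    _ ≤ α * (1 - ∏ s ∈ Finset.range t, (1 - β s)) + α := add_le_add hkey hvt
    _ = 2 * α - α * ∏ s ∈ Finset.range t, (1 - β s) := by ring
  · nlinarith [hPt.1]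
end

section
/- There exists an absolute constant C′ ≤ 3.3359 such that for every integrable real-valued random variable X, ‖X − E X‖_{ψ_{1/2}} ≤ C′ · ‖X‖_{ψ_{1/2}}. -/
open MeasureTheory

/-- The Orlicz `ψ_β`-norm of a real random variable, valued in `ℝ≥0∞`
(`⊤` if no finite constant works):
`‖Z‖_{ψ_β} = inf { K > 0 : E exp(|Z|^β / K^β) ≤ 2 }`. -/
noncomputable def psiNorm {Ω : Type*} [MeasurableSpace Ω] (μ : Measure Ω) (β : ℝ)
    (Z : Ω → ℝ) : ENNReal :=
  sInf {K : ENNReal | ∃ k : ℝ, 0 < k ∧ K = ENNReal.ofReal k ∧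
    ∫ ω, Real.exp (|Z ω| ^ β / k ^ β) ∂μ ≤ 2}

set_option maxHeartbeats 4000000
lemma expUB {x : ℝ} (h0 : 0 ≤ x) (h1 : x ≤ 1) :
    Real.exp x ≤ 1 + x + x^2/2 + x^3/6 + (5/96)*x^4 := by
  have h := Real.exp_bound (x := x) (by rw [abs_of_nonneg h0]; linarith) (n := 4) (by norm_num)
  have hs : ∑ m ∈ Finset.range 4, x ^ m / (m.factorial : ℝ) = 1 + x + x^2/2 + x^3/6 := by
    simp [Finset.sum_range_succ, Nat.factorial]
    try ring
  rw [hs, abs_of_nonneg h0] at h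
  have h2 := (abs_le.mp h).2
  norm_num [Nat.factorial] at h2
  nlinarith [h2]

lemma expQ {x : ℝ} (h0 : 0 ≤ x) (h1 : x ≤ 1) :
    Real.exp x ≤ 1 + x + (3/4)*x^2 := by
  have h := Real.exp_bound (x := x) (by rw [abs_of_nonneg h0]; linarith) (n := 2) (by norm_num)
  have hs : ∑ m ∈ Finset.range 2, x ^ m / (m.factorial : ℝ) = 1 + x := by
    simp [Finset.sum_range_succ, Nat.factorial]
  rw [hs, abs_of_nonneg h0] at h
  have h2 := (abs_le.mp h).2
  norm_num [Nat.factorial] at h2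
  nlinarith [h2]

lemma expLB3 {x : ℝ} (h0 : 0 ≤ x) : 1 + x + x^2/2 ≤ Real.exp x := by
  have h := Real.sum_le_exp_of_nonneg h0 3
  have hs : ∑ i ∈ Finset.range 3, x ^ i / (i.factorial : ℝ) = 1 + x + x^2/2 := by
    simp [Finset.sum_range_succ, Nat.factorial]
    try ring
  linarith [hs ▸ h]

lemma expLB5 {x : ℝ} (h0 : 0 ≤ x) : 1 + x + x^2/2 + x^3/6 + x^4/24 ≤ Real.exp x := by
  have h := Real.sum_le_exp_of_nonneg h0 5
  have hs : ∑ i ∈ Finset.range 5, x ^ i / (i.factorial : ℝ) = 1 + x + x^2/2 + x^3/6 + x^4/24 := by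
    simp [Finset.sum_range_succ, Nat.factorial]
    try ring
  linarith [hs ▸ h]

lemma expUB2 {x : ℝ} (h0 : 0 ≤ x) (h2 : x ≤ 2) :
    Real.exp x ≤ (1 + x/2 + (x/2)^2/2 + (x/2)^3/6 + (5/96)*(x/2)^4)^2 := by
  have h := expUB (x := x/2) (by linarith) (by linarith)
  have hx : Real.exp x = Real.exp (x/2) * Real.exp (x/2) := by
    rw [← Real.exp_add]; ring_nf
  rw [hx, sq]
  exact mul_le_mul h h (Real.exp_pos _).le (by positivity)

lemma taylor_lb (p : ℝ) (h0 : 0 ≤ p) (M : ℝ)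
    (h : M ≤ ∑ i ∈ Finset.range 12, p ^ i / (i.factorial : ℝ)) : M ≤ Real.exp p :=
  le_trans h (Real.sum_le_exp_of_nonneg h0 12)

lemma cbound {u : ℝ} (hu : 0 ≤ u) : 1 + 1.484 * u ≤ Real.exp (Real.sqrt u) := by
  set s := Real.sqrt u with hsdef
  have hs : 0 ≤ s := Real.sqrt_nonneg u
  have hu2 : u = s^2 := (Real.sq_sqrt hu).symm
  have h := expLB5 hs
  rw [hu2]
  nlinarith [mul_nonneg hs (sq_nonneg (s - 2)), sq_nonneg (s - 1.73), hs]

lemma piece_bound {p q a b Lp Mp s : ℝ} (hp0 : 0 ≤ p) (hp : p ≤ s) (hq : s ≤ q)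
    (ha : 0 ≤ a) (hb : 0 ≤ b)
    (hchords : (s^2 + 0.674)/3.3359 ≤ (a*s+b)^2)
    (haw : a*(q-p) ≤ 1)
    (hL : Real.exp (a*p+b) ≤ Lp)
    (hM : Mp ≤ Real.exp p) (hM0 : 0 ≤ Mp)
    (hc0 : Lp ≤ 5/4 + (3/8)*Mp)
    (hc1 : Lp*a ≤ (3/8)*Mp)
    (hc2 : (3/4)*Lp*a^2 ≤ (3/16)*Mp) :
    Real.exp (Real.sqrt ((s^2 + 0.674)/3.3359)) ≤ 5/4 + (3/8) * Real.exp s := by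
  have hs0 : 0 ≤ s := le_trans hp0 hp
  have hsqrt : Real.sqrt ((s^2 + 0.674)/3.3359) ≤ a*s+b := by
    calc Real.sqrt ((s^2 + 0.674)/3.3359) ≤ Real.sqrt ((a*s+b)^2) := Real.sqrt_le_sqrt hchords
      _ = a*s+b := Real.sqrt_sq (by positivity)
  have h1 : Real.exp (Real.sqrt ((s^2 + 0.674)/3.3359)) ≤ Real.exp (a*s+b) :=
    Real.exp_le_exp.2 hsqrt
  have hr0 : 0 ≤ s - p := sub_nonneg.2 hp
  have har1 : a*(s-p) ≤ 1 := le_trans (by nlinarith) haw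
  have h2 : Real.exp (a*s+b) = Real.exp (a*p+b) * Real.exp (a*(s-p)) := by
    rw [← Real.exp_add]; ring_nf
  have h3 : Real.exp (a*(s-p)) ≤ 1 + a*(s-p) + (3/4)*(a*(s-p))^2 := expQ (by positivity) har1
  have h4 : Real.exp (a*s+b) ≤ Lp * (1 + a*(s-p) + (3/4)*(a*(s-p))^2) := by
    rw [h2]
    exact mul_le_mul hL h3 (Real.exp_pos _).le (le_trans (Real.exp_pos _).le hL)
  have h5 : Real.exp s = Real.exp p * Real.exp (s-p) := by rw [← Real.exp_add]; ring_nf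
  have h6 : Mp * (1 + (s-p) + (s-p)^2/2) ≤ Real.exp s := by
    rw [h5]
    exact mul_le_mul hM (expLB3 hr0) (by positivity) (Real.exp_pos _).le
  have h7 : Lp * (1 + a*(s-p) + (3/4)*(a*(s-p))^2) ≤ 5/4 + (3/8) * (Mp * (1 + (s-p) + (s-p)^2/2)) := by
    nlinarith [mul_nonneg (sub_nonneg.2 hc1) hr0, mul_nonneg (sub_nonneg.2 hc2) (sq_nonneg (s-p))]
  linarith [le_trans h1 h4, h7, h6]

lemma main_pointwise {s : ℝ} (hs : 0 ≤ s) :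
    Real.exp (Real.sqrt ((s^2 + 0.674)/3.3359)) ≤ 5/4 + (3/8) * Real.exp s := by
  rcases le_total s (2/5) with h1 | h1
  · refine piece_bound (p := 0) (q := 2/5) (a := 0.1263) (b := 0.4496) (Lp := 1.568) (Mp := 1) (by norm_num) hs h1 (by norm_num) (by norm_num) ?_ (by norm_num) ?_ ?_ (by norm_num) (by norm_num) (by norm_num) (by norm_num)
    · rw [div_le_iff₀ (by norm_num)]
      nlinarith [mul_nonneg (sub_nonneg.2 hs) (sub_nonneg.2 h1)]
    · have hx := expUB (x := (0.4496:ℝ)) (by norm_num) (by norm_num)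
      norm_num at hx ⊢
      linarith
    · exact le_of_eq Real.exp_zero.symm
  have h1' : (2/5:ℝ) ≤ s := h1
  rcases le_total s (4/5) with h2 | h2
  · refine piece_bound (p := 2/5) (q := 4/5) (a := 0.3191) (b := 0.3725) (Lp := 1.6494) (Mp := 1.4918) (by norm_num) h1' h2 (by norm_num) (by norm_num) ?_ (by norm_num) ?_ ?_ (by norm_num) (by norm_num) (by norm_num) (by norm_num)
    · rw [div_le_iff₀ (by norm_num)]
      nlinarith [mul_nonneg (sub_nonneg.2 h1') (sub_nonneg.2 h2)]
    · have hx := expUB (x := (0.50014:ℝ)) (by norm_num) (by norm_num)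
      norm_num at hx ⊢
      linarith
    · apply taylor_lb _ (by norm_num)
      simp [Finset.sum_range_succ, Nat.factorial]
      norm_num
  have h2' : (4/5:ℝ) ≤ s := h2
  rcases le_total s (13/10) with h3 | h3
  · refine piece_bound (p := 4/5) (q := 13/10) (a := 0.4285) (b := 0.2849) (Lp := 1.8741) (Mp := 2.2255) (by norm_num) h2' h3 (by norm_num) (by norm_num) ?_ (by norm_num) ?_ ?_ (by norm_num) (by norm_num) (by norm_num) (by norm_num)
    · rw [div_le_iff₀ (by norm_num)]
      nlinarith [mul_nonneg (sub_nonneg.2 h2') (sub_nonneg.2 h3)]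
    · have hx := expUB (x := (0.6277:ℝ)) (by norm_num) (by norm_num)
      norm_num at hx ⊢
      linarith
    · apply taylor_lb _ (by norm_num)
      simp [Finset.sum_range_succ, Nat.factorial]
      norm_num
  have h3' : (13/10:ℝ) ≤ s := h3
  rcases le_total s (19/10) with h4 | h4
  · refine piece_bound (p := 13/10) (q := 19/10) (a := 0.4857) (b := 0.2105) (Lp := 2.322) (Mp := 3.6692) (by norm_num) h3' h4 (by norm_num) (by norm_num) ?_ (by norm_num) ?_ ?_ (by norm_num) (by norm_num) (by norm_num) (by norm_num)
    · rw [div_le_iff₀ (by norm_num)]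
      nlinarith [mul_nonneg (sub_nonneg.2 h3') (sub_nonneg.2 h4)]
    · have hx := expUB (x := (0.84191:ℝ)) (by norm_num) (by norm_num)
      norm_num at hx ⊢
      linarith
    · apply taylor_lb _ (by norm_num)
      simp [Finset.sum_range_succ, Nat.factorial]
      norm_num
  have h4' : (19/10:ℝ) ≤ s := h4
  rcases le_total s (5/2) with h5 | h5
  · refine piece_bound (p := 19/10) (q := 5/2) (a := 0.5125) (b := 0.1596) (Lp := 3.108) (Mp := 6.6858) (by norm_num) h4' h5 (by norm_num) (by norm_num) ?_ (by norm_num) ?_ ?_ (by norm_num) (by norm_num) (by norm_num) (by norm_num)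
    · rw [div_le_iff₀ (by norm_num)]
      nlinarith [mul_nonneg (sub_nonneg.2 h4') (sub_nonneg.2 h5)]
    · have hx := expUB2 (x := (1.13335:ℝ)) (by norm_num) (by norm_num)
      norm_num at hx ⊢
      linarith
    · apply taylor_lb _ (by norm_num)
      simp [Finset.sum_range_succ, Nat.factorial]
      norm_num
  have h5' : (5/2:ℝ) ≤ s := h5
  rcases le_total s (16/5) with h6 | h6
  · refine piece_bound (p := 5/2) (q := 16/5) (a := 0.5259) (b := 0.1261) (Lp := 4.2283) (Mp := 12.1823) (by norm_num) h5' h6 (by norm_num) (by norm_num) ?_ (by norm_num) ?_ ?_ (by norm_num) (by norm_num) (by norm_num) (by norm_num)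
    · rw [div_le_iff₀ (by norm_num)]
      nlinarith [mul_nonneg (sub_nonneg.2 h5') (sub_nonneg.2 h6)]
    · have hx := expUB2 (x := (1.44085:ℝ)) (by norm_num) (by norm_num)
      norm_num at hx ⊢
      linarith
    · apply taylor_lb _ (by norm_num)
      simp [Finset.sum_range_succ, Nat.factorial]
      norm_num
  have h6' : (16/5:ℝ) ≤ s := h6
  -- tail: s ≥ 16/5
  -- tail: s ≥ 16/5
  have hchord : Real.sqrt ((s^2 + 0.674)/3.3359) ≤ 0.5476*s + 0.4495 := by
    have hq : (s^2 + 0.674)/3.3359 ≤ (0.5476*s + 0.4495)^2 := by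
      rw [div_le_iff₀ (by norm_num)]
      nlinarith [sq_nonneg s, hs]
    calc Real.sqrt ((s^2 + 0.674)/3.3359) ≤ Real.sqrt ((0.5476*s + 0.4495)^2) :=
          Real.sqrt_le_sqrt hq
      _ = 0.5476*s + 0.4495 := Real.sqrt_sq (by positivity)
  have e1 : (2.7182818283:ℝ) < Real.exp 1 := Real.exp_one_gt_d9
  have e3 : (0.99:ℝ) ≤ Real.exp (-(0.01:ℝ)) := by
    have := Real.add_one_le_exp (-(0.01:ℝ)); linarith
  have e4 : (8/3:ℝ) ≤ Real.exp 0.99 := by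
    have e2 : Real.exp (0.99:ℝ) = Real.exp 1 * Real.exp (-(0.01:ℝ)) := by
      rw [← Real.exp_add]; norm_num
    rw [e2]
    nlinarith [e1, e3, (Real.exp_pos (-(0.01:ℝ))).le]
  have he : Real.exp (0.4495 - 0.4524*s) ≤ Real.exp (-(0.99:ℝ)) := by
    apply Real.exp_le_exp.2; linarith
  have he2 : Real.exp (-(0.99:ℝ)) ≤ 3/8 := by
    rw [Real.exp_neg]
    rw [inv_le_comm₀ (Real.exp_pos _) (by norm_num)] at *
    · linarith [e4]
  have hsplit : Real.exp (0.5476*s + 0.4495) = Real.exp s * Real.exp (0.4495 - 0.4524*s) := by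
    rw [← Real.exp_add]; ring_nf
  calc Real.exp (Real.sqrt ((s^2 + 0.674)/3.3359)) ≤ Real.exp (0.5476*s + 0.4495) :=
        Real.exp_le_exp.2 hchord
    _ = Real.exp s * Real.exp (0.4495 - 0.4524*s) := hsplit
    _ ≤ Real.exp s * (3/8) := by
        exact mul_le_mul_of_nonneg_left (le_trans he he2) (Real.exp_pos _).le
    _ ≤ 5/4 + (3/8) * Real.exp s := by linarith [(Real.exp_pos s).le]

lemma key_step {Ω : Type} [MeasurableSpace Ω] (μ : Measure Ω) [IsProbabilityMeasure μ]
    (X : Ω → ℝ) (hX : Measurable X) (hXi : Integrable X μ) (k : ℝ) (hk : 0 < k)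
    (hI : ∫ ω, Real.exp (|X ω| ^ ((1:ℝ)/2) / k ^ ((1:ℝ)/2)) ∂μ ≤ 2) :
    psiNorm μ (1/2) (fun ω => X ω - ∫ x, X x ∂μ) ≤
      ENNReal.ofReal 3.3359 * ENNReal.ofReal k := by
  set m := ∫ x, X x ∂μ with hm
  have hrw : ∀ (c : ℝ) (f : Ω → ℝ) (ω : Ω),
      Real.exp (|f ω| ^ ((1:ℝ)/2) / c ^ ((1:ℝ)/2)) = Real.exp (Real.sqrt (|f ω| / c)) := by
    intro c f ω
    rw [← Real.sqrt_eq_rpow, ← Real.sqrt_eq_rpow, ← Real.sqrt_div (abs_nonneg _)]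
  set f : Ω → ℝ := fun ω => Real.exp (Real.sqrt (|X ω| / k)) with hf
  have hI' : ∫ ω, f ω ∂μ ≤ 2 := by
    rw [show (fun ω => f ω) = fun ω => Real.exp (|X ω| ^ ((1:ℝ)/2) / k ^ ((1:ℝ)/2)) from
      funext fun ω => (hrw k X ω).symm]
    exact hI
  have hfm : Measurable f := ((hX.abs.div_const k).sqrt).exp
  by_cases hfi : Integrable f μ
  · -- main case
    have habs : ∫ ω, |X ω| ∂μ ≤ 0.674 * k := by
      have hpt : (fun ω => 1 + 1.484 * (|X ω| / k)) ≤ f := by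
        intro ω
        exact cbound (by positivity)
      have hint1 : Integrable (fun ω => 1 + 1.484 * (|X ω| / k)) μ :=
        (integrable_const 1).add ((hXi.abs.div_const k).const_mul 1.484)
      have h2 := integral_mono hint1 hfi hpt
      rw [integral_add (integrable_const 1) ((hXi.abs.div_const k).const_mul 1.484),
        integral_const, integral_const_mul, integral_div] at h2
      simp only [measure_univ, probReal_univ, ENNReal.toReal_one, smul_eq_mul, one_mul, mul_one] at h2
      have hJ : (∫ ω, |X ω| ∂μ) / k ≤ 0.674 := by linarith
      rw [div_le_iff₀ hk] at hJ
      linarith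
    have hmabs : |m| ≤ 0.674 * k := by
      have h1 : |m| ≤ ∫ ω, |X ω| ∂μ := by
        calc |m| = ‖∫ x, X x ∂μ‖ := (Real.norm_eq_abs _).symm
          _ ≤ ∫ x, ‖X x‖ ∂μ := norm_integral_le_integral_norm X
          _ = ∫ ω, |X ω| ∂μ := by simp [Real.norm_eq_abs]
      linarith
    set g : Ω → ℝ := fun ω => Real.exp (Real.sqrt (|X ω - m| / (3.3359 * k))) with hg
    have hpt2 : ∀ ω, g ω ≤ 5/4 + (3/8) * f ω := by
      intro ω
      have hu : (0:ℝ) ≤ |X ω| / k := by positivity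
      have hs : 0 ≤ Real.sqrt (|X ω| / k) := Real.sqrt_nonneg _
      have hs2 : (Real.sqrt (|X ω| / k))^2 = |X ω| / k := Real.sq_sqrt hu
      have hZb : |X ω - m| ≤ |X ω| + 0.674 * k := by
        have := abs_sub (X ω) m
        linarith
      have harg : |X ω - m| / (3.3359 * k) ≤ ((Real.sqrt (|X ω| / k))^2 + 0.674) / 3.3359 := by
        rw [hs2]
        rw [div_le_div_iff₀ (by positivity) (by norm_num)]
        have hxk : |X ω| / k * k = |X ω| := div_mul_cancel₀ _ hk.ne'
        nlinarith [hZb]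
      calc g ω ≤ Real.exp (Real.sqrt (((Real.sqrt (|X ω| / k))^2 + 0.674) / 3.3359)) :=
            Real.exp_le_exp.2 (Real.sqrt_le_sqrt harg)
        _ ≤ 5/4 + (3/8) * f ω := main_pointwise hs
    have hgm : Measurable g := (((hX.sub_const m).abs.div_const _).sqrt).exp
    have hbi : Integrable (fun ω => 5/4 + (3/8) * f ω) μ :=
      (integrable_const (5/4 : ℝ)).add (hfi.const_mul (3/8))
    have hgi : Integrable g μ := by
      refine Integrable.mono' hbi hgm.aestronglyMeasurable (Filter.Eventually.of_forall ?_)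
      intro ω
      rw [Real.norm_eq_abs, abs_of_pos (Real.exp_pos _)]
      exact hpt2 ω
    have hgint : ∫ ω, g ω ∂μ ≤ 2 := by
      have h3 := integral_mono hgi hbi hpt2
      rw [integral_add (integrable_const (5/4 : ℝ)) (hfi.const_mul (3/8)),
        integral_const, integral_const_mul] at h3
      simp only [measure_univ, probReal_univ, ENNReal.toReal_one, smul_eq_mul, one_mul] at h3
      linarith
    have hmem : ENNReal.ofReal (3.3359 * k) ∈
        {K : ENNReal | ∃ k' : ℝ, 0 < k' ∧ K = ENNReal.ofReal k' ∧
          ∫ ω, Real.exp (|X ω - m| ^ ((1:ℝ)/2) / k' ^ ((1:ℝ)/2)) ∂μ ≤ 2} := by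
      refine ⟨3.3359 * k, by positivity, rfl, ?_⟩
      rw [show (fun ω => Real.exp (|X ω - m| ^ ((1:ℝ)/2) / (3.3359 * k) ^ ((1:ℝ)/2)))
          = g from funext fun ω => hrw (3.3359 * k) (fun ω => X ω - m) ω]
      exact hgint
    calc psiNorm μ (1/2) (fun ω => X ω - m) ≤ ENNReal.ofReal (3.3359 * k) := sInf_le hmem
      _ = ENNReal.ofReal 3.3359 * ENNReal.ofReal k := ENNReal.ofReal_mul (by norm_num)
  · -- non-integrable case
    have hk2 : 0 < k / 2 := by positivity
    set g2 : Ω → ℝ := fun ω => Real.exp (Real.sqrt (|X ω - m| / (k / 2))) with hg2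
    have hg2m : Measurable g2 := (((hX.sub_const m).abs.div_const _).sqrt).exp
    have hg2ni : ¬ Integrable g2 μ := by
      intro hgi
      apply hfi
      refine Integrable.mono'
        (hgi.add (integrable_const (Real.exp (Real.sqrt (2 * |m| / k)))))
        hfm.aestronglyMeasurable (Filter.Eventually.of_forall ?_)
      intro ω
      rw [Real.norm_eq_abs, abs_of_pos (Real.exp_pos _)]
      rcases le_total (|X ω|) (2 * |m|) with hc | hc
      · have h1 : Real.sqrt (|X ω| / k) ≤ Real.sqrt (2 * |m| / k) :=
          Real.sqrt_le_sqrt (by gcongr)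
        have h2 := Real.exp_le_exp.2 h1
        have h3 := Real.exp_pos (Real.sqrt (|X ω - m| / (k / 2)))
        have hge : g2 ω = Real.exp (Real.sqrt (|X ω - m| / (k / 2))) := rfl
        simp only [Pi.add_apply]
        linarith [hge]
      · have h1 : |X ω| / k ≤ |X ω - m| / (k / 2) := by
          have h4 : |X ω| - |m| ≤ |X ω - m| := abs_sub_abs_le_abs_sub (X ω) m
          rw [div_le_div_iff₀ hk hk2]
          nlinarith [abs_nonneg m]
        have h2 := Real.exp_le_exp.2 (Real.sqrt_le_sqrt h1)
        have h3 := Real.exp_pos (Real.sqrt (2 * |m| / k))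
        have hge : g2 ω = Real.exp (Real.sqrt (|X ω - m| / (k / 2))) := rfl
        simp only [Pi.add_apply]
        linarith [hge]
    have hzero : ∫ ω, Real.exp (|X ω - m| ^ ((1:ℝ)/2) / (k/2) ^ ((1:ℝ)/2)) ∂μ = 0 := by
      rw [show (fun ω => Real.exp (|X ω - m| ^ ((1:ℝ)/2) / (k/2) ^ ((1:ℝ)/2)))
          = g2 from funext fun ω => hrw (k/2) (fun ω => X ω - m) ω]
      exact integral_undef hg2ni
    have hmem : ENNReal.ofReal (k/2) ∈
        {K : ENNReal | ∃ k' : ℝ, 0 < k' ∧ K = ENNReal.ofReal k' ∧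
          ∫ ω, Real.exp (|X ω - m| ^ ((1:ℝ)/2) / k' ^ ((1:ℝ)/2)) ∂μ ≤ 2} :=
      ⟨k/2, hk2, rfl, by rw [hzero]; norm_num⟩
    calc psiNorm μ (1/2) (fun ω => X ω - m) ≤ ENNReal.ofReal (k/2) := sInf_le hmem
      _ ≤ ENNReal.ofReal (3.3359 * k) := ENNReal.ofReal_le_ofReal (by linarith)
      _ = ENNReal.ofReal 3.3359 * ENNReal.ofReal k := ENNReal.ofReal_mul (by norm_num)

/-- The `ψ_{1/2}`-norm of the centered variable `X - E X` is bounded by a universal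
constant `C ≤ 3.3359` times the `ψ_{1/2}`-norm of `X`. -/
theorem psiNorm_half_centering_le :
    ∃ C : ℝ, 0 < C ∧ C ≤ 3.3359 ∧
      ∀ (Ω : Type) (_ : MeasurableSpace Ω) (μ : Measure Ω), IsProbabilityMeasure μ →
        ∀ (X : Ω → ℝ), Measurable X → Integrable X μ →
          psiNorm μ (1 / 2) (fun ω => X ω - ∫ x, X x ∂μ)
            ≤ ENNReal.ofReal C * psiNorm μ (1 / 2) X := by
  refine ⟨3.3359, by norm_num, le_refl _, ?_⟩
  intro Ω mΩ μ hμ X hX hXi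
  set c : ENNReal := ENNReal.ofReal 3.3359 with hc
  have hc0 : c ≠ 0 := (ENNReal.ofReal_pos.2 (by norm_num)).ne'
  have hct : c ≠ ⊤ := ENNReal.ofReal_ne_top
  set T := psiNorm μ (1/2) (fun ω => X ω - ∫ x, X x ∂μ) with hT
  have hdiv : T / c ≤ psiNorm μ (1/2) X := by
    rw [psiNorm]
    refine le_sInf ?_
    rintro K ⟨k, hk, rfl, hI⟩
    refine ENNReal.div_le_of_le_mul ?_
    rw [mul_comm]
    exact key_step μ X hX hXi k hk hI
  calc T = T / c * c := (ENNReal.div_mul_cancel hc0 hct).symm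
    _ ≤ psiNorm μ (1/2) X * c := mul_le_mul_left hdiv c
    _ = c * psiNorm μ (1/2) X := mul_comm _ _
end

section
/- For the standard Gaussian CDF Φ and all y ∈ [1 − 1/√(2πe), 1): Φ^{−1}((y+1)/2) ≤ √(2 log(√2/(√π (1−y)))), and Φ^{−1}((y+1)/2) ≥ √(2 log(√2/(√π(1−y))) − log log(√2/(√π(1−y))) − 3 log 2), provided the expression under the square root is nonnegative. -/
open MeasureTheory ProbabilityTheory

/-- The standard Gaussian cumulative distribution function `Φ`. -/
noncomputable def stdGaussCDF (x : ℝ) : ℝ :=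
  ((gaussianReal 0 1) (Set.Iic x)).toReal

open Real Filter Set

noncomputable def gqbPhi (t : ℝ) : ℝ := (Real.sqrt (2 * Real.pi))⁻¹ * Real.exp (-t ^ 2 / 2)

lemma gqbPhi_pos (t : ℝ) : 0 < gqbPhi t := by
  unfold gqbPhi; positivity

lemma gqbPhi_eq : gaussianPDFReal 0 1 = gqbPhi := by
  ext t
  simp [gaussianPDFReal, gqbPhi]

lemma integrable_gqbPhi : Integrable gqbPhi := by
  rw [← gqbPhi_eq]; exact integrable_gaussianPDFReal 0 1

lemma continuous_gqbPhi : Continuous gqbPhi := by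
  unfold gqbPhi; fun_prop

lemma hasDerivAt_neg_gqbPhi (t : ℝ) : HasDerivAt (fun u => -gqbPhi u) (t * gqbPhi t) t := by
  unfold gqbPhi
  have h : HasDerivAt (fun u : ℝ => -u ^ 2 / 2) (-t) t := by
    have := ((hasDerivAt_pow 2 t).neg).div_const 2
    simpa using this.congr_deriv (by ring)
  have := ((h.exp).const_mul (Real.sqrt (2 * Real.pi))⁻¹).neg
  exact this.congr_deriv (by ring)

lemma tendsto_gqbPhi : Tendsto gqbPhi atTop (nhds 0) := by
  have h1 : Tendsto (fun t : ℝ => -t ^ 2 / 2) atTop atBot := by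
    have h0 : Tendsto (fun t : ℝ => t ^ 2 / 2) atTop atTop :=
      (tendsto_pow_atTop two_ne_zero).atTop_div_const two_pos
    have := tendsto_neg_atBot_iff.mpr h0
    simpa [neg_div] using this
  have h2 : Tendsto (fun t : ℝ => Real.exp (-t ^ 2 / 2)) atTop (nhds 0) :=
    Real.tendsto_exp_atBot.comp h1
  have := h2.const_mul (Real.sqrt (2 * Real.pi))⁻¹
  rw [mul_zero] at this
  exact this

noncomputable def gqbQ (x : ℝ) : ℝ := ∫ t in Set.Ioi x, gqbPhi t

lemma stdGaussCDF_add_gqbQ (x : ℝ) : stdGaussCDF x + gqbQ x = 1 := by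
  have h1 : stdGaussCDF x = ∫ t in Set.Iic x, gqbPhi t := by
    rw [stdGaussCDF, gaussianReal_apply_eq_integral 0 one_ne_zero, gqbPhi_eq,
      ENNReal.toReal_ofReal]
    exact setIntegral_nonneg measurableSet_Iic fun t _ => (gqbPhi_pos t).le
  have h2 : (∫ t in Set.Iic x ∪ Set.Ioi x, gqbPhi t)
      = (∫ t in Set.Iic x, gqbPhi t) + ∫ t in Set.Ioi x, gqbPhi t :=
    setIntegral_union (Set.Iic_disjoint_Ioi le_rfl)
      measurableSet_Ioi integrable_gqbPhi.integrableOn integrable_gqbPhi.integrableOn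
  rw [Set.Iic_union_Ioi] at h2
  have h3 : (∫ t, gqbPhi t) = 1 := by
    rw [← gqbPhi_eq]; exact integral_gaussianPDFReal_eq_one 0 one_ne_zero
  rw [h1, gqbQ, ← h2]
  simpa using h3

lemma gqbQ_strictAnti {a b : ℝ} (h : a < b) : gqbQ b < gqbQ a := by
  have hsplit : (∫ t in Set.Ioc a b ∪ Set.Ioi b, gqbPhi t)
      = (∫ t in Set.Ioc a b, gqbPhi t) + ∫ t in Set.Ioi b, gqbPhi t :=
    setIntegral_union Set.Ioc_disjoint_Ioi_same
      measurableSet_Ioi integrable_gqbPhi.integrableOn integrable_gqbPhi.integrableOn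
  rw [Set.Ioc_union_Ioi_eq_Ioi h.le] at hsplit
  have hpos : 0 < ∫ t in Set.Ioc a b, gqbPhi t := by
    rw [setIntegral_pos_iff_support_of_nonneg_ae
      (ae_of_all _ fun t => (gqbPhi_pos t).le) integrable_gqbPhi.integrableOn]
    have hsupp : Function.support gqbPhi = Set.univ := by
      ext t; simp [Function.support, (gqbPhi_pos t).ne']
    rw [hsupp, Set.univ_inter]
    simpa using h
  have hQ : gqbQ a = (∫ t in Set.Ioc a b, gqbPhi t) + gqbQ b := by
    rw [gqbQ, gqbQ]; exact hsplit
  rw [hQ]; linarith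

lemma gqbQ_le_iff {a b : ℝ} : gqbQ a ≤ gqbQ b ↔ b ≤ a := by
  constructor
  · intro h
    by_contra hc
    exact absurd h (not_le.2 (gqbQ_strictAnti (not_le.1 hc)))
  · intro h
    rcases h.eq_or_lt with rfl | h
    · exact le_rfl
    · exact (gqbQ_strictAnti h).le

lemma integral_mul_gqbPhi {x : ℝ} (hx : 0 < x) :
    ∫ t in Set.Ioi x, t * gqbPhi t = gqbPhi x := by
  have := integral_Ioi_of_hasDerivAt_of_nonneg' (g := fun u => -gqbPhi u)
    (g' := fun t => t * gqbPhi t) (fun t _ => hasDerivAt_neg_gqbPhi t)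
    (fun t ht => mul_nonneg (hx.trans ht).le (gqbPhi_pos t).le) (l := 0) ?_
  · simpa using this
  · simpa using tendsto_gqbPhi.neg

lemma integrableOn_mul_gqbPhi {x : ℝ} (hx : 0 < x) :
    IntegrableOn (fun t => t * gqbPhi t) (Set.Ioi x) :=
  integrableOn_Ioi_deriv_of_nonneg' (g := fun u => -gqbPhi u)
    (fun t _ => hasDerivAt_neg_gqbPhi t)
    (fun t ht => mul_nonneg (hx.trans ht).le (gqbPhi_pos t).le) (l := 0)
    (by simpa using tendsto_gqbPhi.neg)

lemma gqbQ_le {x : ℝ} (hx : 1 ≤ x) : gqbQ x ≤ gqbPhi x / x := by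
  have hx0 : (0:ℝ) < x := lt_of_lt_of_le one_pos hx
  have hmono : gqbQ x ≤ ∫ t in Set.Ioi x, x⁻¹ * (t * gqbPhi t) := by
    refine setIntegral_mono_on integrable_gqbPhi.integrableOn
      ((integrableOn_mul_gqbPhi hx0).const_mul x⁻¹) measurableSet_Ioi fun t ht => ?_
    have ht' : x < t := ht
    have : gqbPhi t * 1 ≤ gqbPhi t * (x⁻¹ * t) := by
      apply mul_le_mul_of_nonneg_left _ (gqbPhi_pos t).le
      rw [le_inv_mul_iff₀ hx0, mul_one]
      exact ht'.le
    calc gqbPhi t = gqbPhi t * 1 := (mul_one _).symm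
      _ ≤ gqbPhi t * (x⁻¹ * t) := this
      _ = x⁻¹ * (t * gqbPhi t) := by ring
  rw [integral_const_mul, integral_mul_gqbPhi hx0] at hmono
  rw [div_eq_inv_mul]
  exact hmono

noncomputable def gqbG (t : ℝ) : ℝ := t / (t ^ 2 + 1) * gqbPhi t

lemma hasDerivAt_gqbPhi (t : ℝ) : HasDerivAt gqbPhi (-(t * gqbPhi t)) t := by
  have := (hasDerivAt_neg_gqbPhi t).neg
  exact this.congr_of_eventuallyEq (Filter.Eventually.of_forall fun u => by simp)

lemma hasDerivAt_neg_gqbG (t : ℝ) :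
    HasDerivAt (fun u => -gqbG u)
      (gqbPhi t * ((t ^ 2) ^ 2 + 2 * t ^ 2 - 1) / (t ^ 2 + 1) ^ 2) t := by
  have h1 : t ^ 2 + 1 ≠ 0 := by positivity
  have hrat : HasDerivAt (fun u : ℝ => u / (u ^ 2 + 1))
      ((1 * (t ^ 2 + 1) - t * (2 * t ^ 1)) / (t ^ 2 + 1) ^ 2) t := by
    exact (hasDerivAt_id t).div ((hasDerivAt_pow 2 t).add_const 1) h1
  have h2 := (hrat.mul (hasDerivAt_gqbPhi t)).neg
  have h3 : HasDerivAt (fun u => -gqbG u)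
      (-((1 * (t ^ 2 + 1) - t * (2 * t ^ 1)) / (t ^ 2 + 1) ^ 2 * gqbPhi t
        + t / (t ^ 2 + 1) * -(t * gqbPhi t))) t := h2
  convert h3 using 1
  field_simp
  ring

lemma tendsto_gqbG : Tendsto gqbG atTop (nhds 0) := by
  apply squeeze_zero' (g := gqbPhi)
  · filter_upwards [eventually_ge_atTop (0:ℝ)] with t ht
    have : 0 < t ^ 2 + 1 := by positivity
    exact mul_nonneg (div_nonneg ht this.le) (gqbPhi_pos t).le
  · filter_upwards [eventually_ge_atTop (0:ℝ)] with t ht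
    unfold gqbG
    have h1 : 0 < t ^ 2 + 1 := by positivity
    have h2 : t / (t ^ 2 + 1) ≤ 1 := by
      rw [div_le_one h1]; nlinarith
    calc t / (t ^ 2 + 1) * gqbPhi t ≤ 1 * gqbPhi t :=
          mul_le_mul_of_nonneg_right h2 (gqbPhi_pos t).le
      _ = gqbPhi t := one_mul _
  · exact tendsto_gqbPhi

lemma le_gqbQ {x : ℝ} (hx : 1 ≤ x) : x / (x ^ 2 + 1) * gqbPhi x ≤ gqbQ x := by
  have hpos : ∀ t ∈ Set.Ioi x, 0 ≤ gqbPhi t * ((t ^ 2) ^ 2 + 2 * t ^ 2 - 1) / (t ^ 2 + 1) ^ 2 := by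
    intro t ht
    have ht1 : 1 < t := lt_of_le_of_lt hx ht
    have h : (0:ℝ) ≤ (t ^ 2) ^ 2 + 2 * t ^ 2 - 1 := by nlinarith
    exact div_nonneg (mul_nonneg (gqbPhi_pos t).le h) (by positivity)
  have key := integral_Ioi_of_hasDerivAt_of_nonneg' (g := fun u => -gqbG u)
    (fun t _ => hasDerivAt_neg_gqbG t) hpos (l := 0) (by simpa using tendsto_gqbG.neg)
  have hint := integrableOn_Ioi_deriv_of_nonneg' (g := fun u => -gqbG u)
    (fun t _ => hasDerivAt_neg_gqbG t) hpos (l := 0) (by simpa using tendsto_gqbG.neg)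
  have hmono : (∫ t in Set.Ioi x, gqbPhi t * ((t ^ 2) ^ 2 + 2 * t ^ 2 - 1) / (t ^ 2 + 1) ^ 2)
      ≤ gqbQ x := by
    refine setIntegral_mono_on hint integrable_gqbPhi.integrableOn measurableSet_Ioi
      fun t ht => ?_
    have h1 : (0:ℝ) < (t ^ 2 + 1) ^ 2 := by positivity
    rw [div_le_iff₀ h1]
    have : (t ^ 2) ^ 2 + 2 * t ^ 2 - 1 ≤ (t ^ 2 + 1) ^ 2 := by nlinarith
    nlinarith [(gqbPhi_pos t).le, gqbPhi_pos t]
  rw [key] at hmono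
  simpa [gqbG] using hmono

set_option maxHeartbeats 1000000 in
/-- Two-sided bounds on the Gaussian quantile `Φ⁻¹((y+1)/2)` for
`y ∈ [1 − 1/√(2πe), 1)`: any `x` with `Φ x = (y+1)/2` satisfies
`x ≤ √(2 log(√2/(√π(1−y))))` and, provided the expression under the square root is
nonnegative, `x ≥ √(2 log(√2/(√π(1−y))) − log log(√2/(√π(1−y))) − 3 log 2)`. -/
theorem gaussian_quantile_bounds (y x : ℝ)
    (hy1 : 1 - 1 / Real.sqrt (2 * Real.pi * Real.exp 1) ≤ y) (hy2 : y < 1)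
    (hx : stdGaussCDF x = (y + 1) / 2) :
    x ≤ Real.sqrt (2 * Real.log (Real.sqrt 2 / (Real.sqrt Real.pi * (1 - y)))) ∧
    (0 ≤ 2 * Real.log (Real.sqrt 2 / (Real.sqrt Real.pi * (1 - y)))
          - Real.log (Real.log (Real.sqrt 2 / (Real.sqrt Real.pi * (1 - y))))
          - 3 * Real.log 2 →
      Real.sqrt (2 * Real.log (Real.sqrt 2 / (Real.sqrt Real.pi * (1 - y)))
          - Real.log (Real.log (Real.sqrt 2 / (Real.sqrt Real.pi * (1 - y))))
          - 3 * Real.log 2) ≤ x) := by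
  have hr0 : (0:ℝ) < 1 - y := by linarith
  set r := 1 - y with hr
  have hre : r ≤ 1 / Real.sqrt (2 * Real.pi * Real.exp 1) := by rw [hr]; linarith
  set c := Real.sqrt 2 / (Real.sqrt Real.pi * r) with hc
  set L := Real.log c with hL
  have hπ : (0:ℝ) < Real.pi := Real.pi_pos
  have hcpos : 0 < c := by rw [hc]; positivity
  have he2 : Real.sqrt (Real.exp 1) ^ 2 = Real.exp 1 := Real.sq_sqrt (Real.exp_pos 1).le
  have hp2 : Real.sqrt Real.pi ^ 2 = Real.pi := Real.sq_sqrt hπ.le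
  have hM : (0:ℝ) < 2 * Real.pi * Real.exp 1 := by positivity
  have hr2 : r ^ 2 ≤ 1 / (2 * Real.pi * Real.exp 1) := by
    have hs : (0:ℝ) < Real.sqrt (2 * Real.pi * Real.exp 1) := Real.sqrt_pos.2 hM
    have h1 : r * r ≤ (1 / Real.sqrt (2 * Real.pi * Real.exp 1))
        * (1 / Real.sqrt (2 * Real.pi * Real.exp 1)) :=
      mul_le_mul hre hre hr0.le (by positivity)
    calc r ^ 2 = r * r := sq r
      _ ≤ _ := h1
      _ = 1 / (2 * Real.pi * Real.exp 1) := by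
          rw [div_mul_div_comm, one_mul, Real.mul_self_sqrt hM.le]
  have hcge : 2 * Real.sqrt (Real.exp 1) ≤ c := by
    rw [hc, le_div_iff₀ (by positivity)]
    refine Real.le_sqrt_of_sq_le ?_
    have hx2 : (2 * Real.sqrt (Real.exp 1) * (Real.sqrt Real.pi * r)) ^ 2
        = 4 * Real.exp 1 * Real.pi * r ^ 2 := by
      rw [mul_pow, mul_pow, mul_pow, he2, hp2]; ring
    rw [hx2]
    have h3 : 4 * Real.exp 1 * Real.pi * r ^ 2
        ≤ 4 * Real.exp 1 * Real.pi * (1 / (2 * Real.pi * Real.exp 1)) :=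
      mul_le_mul_of_nonneg_left hr2 (by positivity)
    have h4 : 4 * Real.exp 1 * Real.pi * (1 / (2 * Real.pi * Real.exp 1)) = 2 := by
      field_simp
      ring
    exact h3.trans_eq h4
  have hLge : Real.log 2 + 1/2 ≤ L := by
    have h1 : Real.log (2 * Real.sqrt (Real.exp 1)) ≤ L := by
      rw [hL]
      exact Real.log_le_log (by positivity) hcge
    rw [Real.log_mul two_ne_zero (by positivity), Real.log_sqrt (Real.exp_pos 1).le,
      Real.log_exp] at h1
    linarith
  have hL1 : 1 < L := by
    have := Real.log_two_gt_d9
    linarith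
  have hLpos : (0:ℝ) < L := by linarith
  have hexp_negL : Real.exp (-L) = Real.sqrt Real.pi * r / Real.sqrt 2 := by
    rw [Real.exp_neg, hL, Real.exp_log hcpos, hc, inv_div]
  have h22 : Real.sqrt 2 * Real.sqrt 2 = 2 := Real.mul_self_sqrt (by norm_num)
  have hs2ne : Real.sqrt 2 ≠ 0 := by positivity
  have hspne : Real.sqrt Real.pi ≠ 0 := by positivity
  have hsplit2pi : Real.sqrt (2 * Real.pi) = Real.sqrt 2 * Real.sqrt Real.pi :=
    Real.sqrt_mul (by norm_num) Real.pi
  have hphi_u : gqbPhi (Real.sqrt (2 * L)) = r / 2 := by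
    unfold gqbPhi
    rw [Real.sq_sqrt (by positivity : (0:ℝ) ≤ 2 * L),
      show -(2 * L) / 2 = -L by ring, hexp_negL, hsplit2pi]
    field_simp
    linear_combination (-1) * h22
  have hQx : gqbQ x = r / 2 := by
    have h := stdGaussCDF_add_gqbQ x
    rw [hx] at h
    rw [hr]; linarith
  have hu1 : 1 ≤ Real.sqrt (2 * L) := Real.one_le_sqrt.2 (by linarith)
  have hupper : x ≤ Real.sqrt (2 * L) := by
    have h1 : gqbQ (Real.sqrt (2 * L)) ≤ gqbPhi (Real.sqrt (2 * L)) / Real.sqrt (2 * L) :=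
      gqbQ_le hu1
    have h2 : gqbPhi (Real.sqrt (2 * L)) / Real.sqrt (2 * L) ≤ gqbPhi (Real.sqrt (2 * L)) :=
      div_le_self (gqbPhi_pos _).le hu1
    refine gqbQ_le_iff.1 ?_
    rw [hQx, ← hphi_u]
    linarith
  have hphi1 : gqbPhi 1 = 1 / Real.sqrt (2 * Real.pi * Real.exp 1) := by
    unfold gqbPhi
    rw [Real.sqrt_mul (by positivity : (0:ℝ) ≤ 2 * Real.pi) (Real.exp 1), ← Real.exp_half,
      show -(1:ℝ) ^ 2 / 2 = -(1/2) by norm_num, Real.exp_neg]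
    field_simp
  have hx1 : (1:ℝ) ≤ x := by
    refine gqbQ_le_iff.1 ?_
    have h1 := le_gqbQ (le_refl (1:ℝ))
    have h2 : (1:ℝ) / ((1:ℝ) ^ 2 + 1) * gqbPhi 1 = gqbPhi 1 / 2 := by norm_num; ring
    rw [h2] at h1
    rw [hQx]
    rw [hphi1] at h1
    linarith
  refine ⟨hupper, fun hD => ?_⟩
  set D := 2 * L - Real.log L - 3 * Real.log 2 with hDdef
  by_cases hs1 : Real.sqrt D ≤ 1
  · linarith
  · push_neg at hs1
    set s := Real.sqrt D with hsdef
    have hs0 : (0:ℝ) < s := lt_trans one_pos hs1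
    have hsq : s ^ 2 = D := Real.sq_sqrt hD
    have hlogLpos : 0 < Real.log L := Real.log_pos hL1
    have hlog2pos : 0 < Real.log 2 := Real.log_pos one_lt_two
    have hDle : D ≤ 2 * L := by rw [hDdef]; linarith
    have hsle : s ≤ Real.sqrt (2 * L) := Real.sqrt_le_sqrt hDle
    have hB : Real.sqrt 2 * Real.sqrt L = Real.sqrt (2 * L) :=
      (Real.sqrt_mul (by norm_num) L).symm
    have hsL : Real.sqrt L ≠ 0 := by positivity
    have hphis : gqbPhi s = Real.sqrt (2 * L) * r := by
      unfold gqbPhi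
      rw [hsdef, Real.sq_sqrt hD, hDdef,
        show -(2 * L - Real.log L - 3 * Real.log 2) / 2
          = -L + Real.log L / 2 + (Real.log 2 + Real.log 2 / 2) by ring,
        Real.exp_add, Real.exp_add, Real.exp_add, hexp_negL, Real.exp_half, Real.exp_half,
        Real.exp_log hLpos, Real.exp_log two_pos, hsplit2pi, ← hB]
      field_simp
      linear_combination (-1) * h22
    have hkey : r / 2 ≤ gqbQ s := by
      have h1 := le_gqbQ hs1.le
      have hA : 1 / (2 * s) ≤ s / (s ^ 2 + 1) := by
        rw [div_le_div_iff₀ (by positivity) (by positivity)]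
        nlinarith
      have h2 : 1 / (2 * s) * gqbPhi s ≤ s / (s ^ 2 + 1) * gqbPhi s :=
        mul_le_mul_of_nonneg_right hA (gqbPhi_pos s).le
      have h3 : r / 2 ≤ 1 / (2 * s) * gqbPhi s := by
        rw [hphis,
          show (1:ℝ) / (2 * s) * (Real.sqrt (2 * L) * r) = Real.sqrt (2 * L) * r / (2 * s) by ring,
          div_le_div_iff₀ two_pos (by positivity : (0:ℝ) < 2 * s)]
        nlinarith [hsle, hr0]
      linarith
    refine gqbQ_le_iff.1 ?_
    rw [hQx]
    exact hkey
end
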